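/- Let G be a finitely generated group and H ≤ G a subgroup with 2 ≤ ẽ(G,H) ≤ ω (the number of coends is at least 2 and every deep-component count is finite). Then for every integer p with 2 ≤ p ≤ ẽ(G,H), the subgroup H contains a finite-index subgroup H₀ with e(G,H₀) ≥ p; in particular H is virtually a codimension-one subgroup of G. -/

import Mathlib

open SimpleGraph

variable {G : Type*} [Group G]

/-- The Cayley graph of `G` with respect to a (symmetric) generating set `S`. -/
def Cay (S : Finset G) : SimpleGraph G :=
  SimpleGraph.fromRel (fun x y => x⁻¹ * y ∈ S)

/-- The subgraph of a graph induced on `Y` (kept on the same vertex set). -/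
def RestrictTo {V : Type*} (X : SimpleGraph V) (Y : Set V) : SimpleGraph V where
  Adj a b := X.Adj a b ∧ a ∈ Y ∧ b ∈ Y
  symm := by constructor; intro a b h; exact ⟨h.1.symm, h.2.2, h.2.1⟩
  loopless := by constructor; intro a h; exact X.irrefl h.1

/-- The closed `L`-neighbourhood of a subset `A ⊆ G` in the Cayley graph. -/
def nbhd (S : Finset G) (A : Set G) (L : ℕ) : Set G :=
  {x : G | ∃ a ∈ A, (Cay S).dist x a ≤ L}

/-- A deep component of `G ∖ K^{+L}`: a connected component of the complement of
the `L`-neighbourhood of `K` containing points arbitrarily far from `K`. -/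
def IsDeepComp (S : Finset G) (K : Subgroup G) (L : ℕ) (C : Set G) : Prop :=
  (∃ x : G, x ∉ nbhd S (K : Set G) L ∧
    C = {y : G | (RestrictTo (Cay S) (nbhd S (K : Set G) L)ᶜ).Reachable x y}) ∧
  ∀ R : ℕ, ∃ c ∈ C, ∀ h ∈ K, R < (Cay S).dist c h

/-- `e(G,K) ≥ p`: for some `L`, the complement `G ∖ K^{+L}` has at least `p`
deep components lying in pairwise distinct `K`-orbits. -/
def RelEndsGe (S : Finset G) (K : Subgroup G) (p : ℕ) : Prop :=
  ∃ L : ℕ, ∃ f : Fin p → Set G, (∀ i, IsDeepComp S K L (f i)) ∧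
    ∀ i j : Fin p, i ≠ j → ∀ k ∈ K, (fun x => k * x) '' f i ≠ f j

namespace Stmt19Aux

variable (S : Finset G)

lemma cay_adj_iff {x y : G} : (Cay S).Adj x y ↔ x ≠ y ∧ (x⁻¹ * y ∈ S ∨ y⁻¹ * x ∈ S) :=
  SimpleGraph.fromRel_adj _ x y

lemma cay_adj_mul (g : G) {x y : G} (h : (Cay S).Adj x y) : (Cay S).Adj (g * x) (g * y) := by
  rw [cay_adj_iff] at h ⊢
  refine ⟨fun e => h.1 (mul_left_cancel e), ?_⟩
  simpa [mul_inv_rev, mul_assoc] using h.2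

/-- Left multiplication as a graph homomorphism of the Cayley graph. -/
def mulHom (g : G) : Cay S →g Cay S :=
  ⟨fun x => g * x, fun h => cay_adj_mul S g h⟩

lemma cay_reachable_mul (g : G) {x y : G} (h : (Cay S).Reachable x y) :
    (Cay S).Reachable (g * x) (g * y) := h.map (mulHom S g)

lemma cay_connected (hsym : ∀ s ∈ S, s⁻¹ ∈ S)
    (hgen : Subgroup.closure (S : Set G) = ⊤) : (Cay S).Connected := by
  have key : ∀ z : G, (Cay S).Reachable 1 z := by
    intro z
    have hz : z ∈ Subgroup.closure (S : Set G) := by rw [hgen]; trivial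
    induction hz using Subgroup.closure_induction with
    | mem s hs =>
        by_cases h1 : s = (1 : G)
        · subst h1; exact Reachable.refl _
        · exact SimpleGraph.Adj.reachable
            ((cay_adj_iff S).mpr ⟨fun e => h1 e.symm, Or.inl (by simpa using hs)⟩)
    | one => exact Reachable.refl _
    | mul x y hx hy px py =>
        exact px.trans (by simpa using cay_reachable_mul S x py)
    | inv x hx px =>
        have h1 : (Cay S).Reachable x⁻¹ 1 := by
          simpa using cay_reachable_mul S x⁻¹ px
        exact h1.symm
  exact (SimpleGraph.connected_iff_exists_forall_reachable (Cay S)).mpr ⟨1, key⟩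

variable {S}

lemma restrictTo_adj {V : Type*} (X : SimpleGraph V) (Y : Set V) (a b : V) :
    (RestrictTo X Y).Adj a b ↔ X.Adj a b ∧ a ∈ Y ∧ b ∈ Y := Iff.rfl

lemma cay_dist_mul_le (hc : (Cay S).Connected) (g x y : G) :
    (Cay S).dist (g * x) (g * y) ≤ (Cay S).dist x y := by
  obtain ⟨w, hw⟩ := (hc.preconnected x y).exists_walk_length_eq_dist
  calc (Cay S).dist (g * x) (g * y) ≤ (w.map (mulHom S g)).length := SimpleGraph.dist_le _
    _ = (Cay S).dist x y := by rw [SimpleGraph.Walk.length_map, hw]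

lemma cay_dist_mul (hc : (Cay S).Connected) (g x y : G) :
    (Cay S).dist (g * x) (g * y) = (Cay S).dist x y := by
  refine le_antisymm (cay_dist_mul_le hc g x y) ?_
  have := cay_dist_mul_le hc g⁻¹ (g * x) (g * y)
  simpa using this

open Classical in
/-- Finite over-approximations of balls in the Cayley graph. -/
noncomputable def cayBall (S : Finset G) : ℕ → G → Finset G
  | 0, x => {x}
  | (n + 1), x => {x} ∪ S.biUnion (fun s => cayBall S n (x * s))

lemma walk_mem_cayBall (hsym : ∀ s ∈ S, s⁻¹ ∈ S) :
    ∀ (n : ℕ) (x y : G) (w : (Cay S).Walk x y), w.length ≤ n → y ∈ cayBall S n x := by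
  intro n
  induction n with
  | zero =>
      intro x y w hw
      have h0 : w.length = 0 := Nat.le_zero.mp hw
      have := w.eq_of_length_eq_zero h0
      subst this
      simp [cayBall]
  | succ n ih =>
      intro x y w hw
      cases w with
      | nil => simp [cayBall]
      | @cons _ z _ h w' =>
          have hs : x⁻¹ * z ∈ S := by
            rcases (cay_adj_iff S).mp h with ⟨-, hor⟩
            rcases hor with h' | h'
            · exact h'
            · have := hsym _ h'
              rwa [mul_inv_rev, inv_inv] at this
          have hy : y ∈ cayBall S n (x * (x⁻¹ * z)) := by
            rw [mul_inv_cancel_left]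
            exact ih z y w' (by simpa [SimpleGraph.Walk.length_cons] using hw)
          classical
          simp only [cayBall, Finset.mem_union, Finset.mem_biUnion]
          exact Or.inr ⟨x⁻¹ * z, hs, by convert hy using 2 <;> simp⟩

lemma ball_finite (hsym : ∀ s ∈ S, s⁻¹ ∈ S) (hc : (Cay S).Connected) (r : ℕ) :
    {x : G | (Cay S).dist 1 x ≤ r}.Finite := by
  refine Set.Finite.subset (cayBall S r 1).finite_toSet (fun x hx => ?_)
  obtain ⟨w, hw⟩ := (hc.preconnected 1 x).exists_walk_length_eq_dist
  exact walk_mem_cayBall hsym r 1 x w (by rw [hw]; exact hx)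

lemma exists_boundary (W : Set G) {x b : G} (w : (Cay S).Walk x b) :
    x ∉ W → b ∈ W →
    ∃ z y : G, (RestrictTo (Cay S) Wᶜ).Reachable x z ∧ z ∉ W ∧ y ∈ W ∧ (Cay S).Adj z y := by
  induction w with
  | nil => intro hx hb; exact absurd hb hx
  | @cons u c b h w' ih =>
      intro hx hb
      by_cases hcW : c ∈ W
      · exact ⟨u, c, Reachable.refl _, hx, hcW, h⟩
      · obtain ⟨z, y, hr, hz, hy, hadj⟩ := ih hcW hb
        exact ⟨z, y, (SimpleGraph.Adj.reachable ((restrictTo_adj _ _ _ _).mpr ⟨h, hx, hcW⟩)).trans hr, hz, hy, hadj⟩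

lemma nbhd_mul_mem (hc : (Cay S).Connected) {K : Subgroup G} {k : G} (hk : k ∈ K) {L : ℕ}
    {x : G} (hx : x ∈ nbhd S (K : Set G) L) : k * x ∈ nbhd S (K : Set G) L := by
  obtain ⟨a, ha, hd⟩ := hx
  exact ⟨k * a, K.mul_mem hk ha, by rwa [cay_dist_mul hc]⟩

lemma nbhd_mul_iff (hc : (Cay S).Connected) {K : Subgroup G} {k : G} (hk : k ∈ K) {L : ℕ}
    {x : G} : k * x ∈ nbhd S (K : Set G) L ↔ x ∈ nbhd S (K : Set G) L := by
  refine ⟨fun h => ?_, nbhd_mul_mem hc hk⟩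
  have := nbhd_mul_mem hc (K.inv_mem hk) h
  simpa using this

lemma restrict_reachable_mul (hc : (Cay S).Connected) {K : Subgroup G} {k : G} (hk : k ∈ K)
    {L : ℕ} {x y : G}
    (h : (RestrictTo (Cay S) (nbhd S (K : Set G) L)ᶜ).Reachable x y) :
    (RestrictTo (Cay S) (nbhd S (K : Set G) L)ᶜ).Reachable (k * x) (k * y) := by
  refine h.map (⟨fun z => k * z, ?_⟩ :
    RestrictTo (Cay S) (nbhd S (K : Set G) L)ᶜ →g RestrictTo (Cay S) (nbhd S (K : Set G) L)ᶜ)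
  rintro a b ⟨hab, ha, hb⟩
  exact ⟨cay_adj_mul S k hab,
    fun hm => ha ((nbhd_mul_iff hc hk).mp hm),
    fun hm => hb ((nbhd_mul_iff hc hk).mp hm)⟩

lemma class_image (hc : (Cay S).Connected) {K : Subgroup G} {k : G} (hk : k ∈ K) {L : ℕ}
    (x : G) :
    (fun y => k * y) '' {y : G | (RestrictTo (Cay S) (nbhd S (K : Set G) L)ᶜ).Reachable x y}
      = {y : G | (RestrictTo (Cay S) (nbhd S (K : Set G) L)ᶜ).Reachable (k * x) y} := by
  ext y
  constructor
  · rintro ⟨z, hz, rfl⟩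
    exact restrict_reachable_mul hc hk hz
  · intro hy
    refine ⟨k⁻¹ * y, ?_, by simp⟩
    have := restrict_reachable_mul hc (K.inv_mem hk) hy
    simpa using this

lemma isDeep_image (hc : (Cay S).Connected) {K : Subgroup G} {k : G} (hk : k ∈ K) {L : ℕ}
    {C : Set G} (h : IsDeepComp S K L C) : IsDeepComp S K L ((fun y => k * y) '' C) := by
  obtain ⟨⟨x, hx, rfl⟩, hdeep⟩ := h
  refine ⟨⟨k * x, fun hm => hx ((nbhd_mul_iff hc hk).mp hm), class_image hc hk x⟩, ?_⟩
  intro R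
  obtain ⟨c, hcC, hcd⟩ := hdeep R
  refine ⟨k * c, ⟨c, hcC, rfl⟩, fun h' hh' => ?_⟩
  have hdd : (Cay S).dist (k * c) h' = (Cay S).dist c (k⁻¹ * h') := by
    conv_lhs => rw [show h' = k * (k⁻¹ * h') by simp]
    rw [cay_dist_mul hc]
  rw [hdd]
  exact hcd _ (K.mul_mem (K.inv_mem hk) hh')

lemma class_eq_of_mem {V : Type*} {R : SimpleGraph V} {x y : V} (h : R.Reachable x y) :
    {z : V | R.Reachable y z} = {z : V | R.Reachable x z} := by
  ext z
  exact ⟨fun hz => h.trans hz, fun hz => h.symm.trans hz⟩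

/-- The permutation of deep components induced by an element of `H`. -/
noncomputable def deepEquiv (hc : (Cay S).Connected) (H : Subgroup G) (L : ℕ) (h : H) :
    Equiv.Perm {C : Set G // IsDeepComp S H L C} where
  toFun C := ⟨(fun y => (h : G) * y) '' C.1, isDeep_image hc h.2 C.2⟩
  invFun C := ⟨(fun y => ((h : G))⁻¹ * y) '' C.1, isDeep_image hc (H.inv_mem h.2) C.2⟩
  left_inv C := by ext1; simp [Set.image_image, Set.preimage_preimage]
  right_inv C := by ext1; simp [Set.image_image, Set.preimage_preimage]

/-- The action of `H` on the set of deep components, as a homomorphism. -/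
noncomputable def deepHom (hc : (Cay S).Connected) (H : Subgroup G) (L : ℕ) :
    H →* Equiv.Perm {C : Set G // IsDeepComp S H L C} :=
  MonoidHom.mk' (deepEquiv hc H L) (by
    intro a b
    refine Equiv.ext fun C => Subtype.ext ?_
    show (fun y => ((a * b : H) : G) * y) '' C.1
        = (fun y => (a : G) * y) '' ((fun y => (b : G) * y) '' C.1)
    rw [Set.image_image]
    simp [mul_assoc])

end Stmt19Aux

open Stmt19Aux in
/-- If `2 ≤ ẽ(G,H) ≤ ω` then, for every `2 ≤ p ≤ ẽ(G,H)`, the subgroup `H`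
contains a finite-index subgroup `H₀` with `e(G,H₀) ≥ p`; in particular `H` is
virtually codimension-one in `G`. -/
theorem stmt19 (S : Finset G) (hsym : ∀ s ∈ S, s⁻¹ ∈ S)
    (hgen : Subgroup.closure (S : Set G) = ⊤)
    (H : Subgroup G) (p : ℕ) (hp : 2 ≤ p)
    (hdeep : ∃ L : ℕ, ∃ f : Fin p → Set G,
      Function.Injective f ∧ ∀ i, IsDeepComp S H L (f i))
    (hfin : ∀ L : ℕ, {C : Set G | IsDeepComp S H L C}.Finite) :
    ∃ H₀ : Subgroup G, H₀ ≤ H ∧ H₀.relIndex H ≠ 0 ∧ RelEndsGe S H₀ p := by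
  classical
  obtain ⟨L, f, hinj, hdc⟩ := hdeep
  have hc : (Cay S).Connected := cay_connected S hsym hgen
  haveI : Finite {C : Set G // IsDeepComp S H L C} := (hfin L).to_subtype
  set φ := deepHom (S := S) hc H L with hφ
  set H₀ := φ.ker.map H.subtype with hH₀def
  have hH₀le : H₀ ≤ H := Subgroup.map_subtype_le _
  have hK : H₀.subgroupOf H = φ.ker :=
    Subgroup.comap_map_eq_self_of_injective H.subtype_injective _
  have hrel : H₀.relIndex H = φ.ker.index := by rw [Subgroup.relIndex, hK]
  have hkerind : φ.ker.index ≠ 0 := by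
    rw [Subgroup.index_ker]
    have h1 : Nonempty φ.range := ⟨⟨φ 1, 1, rfl⟩⟩
    exact Nat.card_ne_zero.mpr ⟨h1, inferInstance⟩
  have hrelne : H₀.relIndex H ≠ 0 := by rw [hrel]; exact hkerind
  -- every element of H₀ fixes every deep component at level L
  have hfix : ∀ g ∈ H₀, ∀ C : Set G, IsDeepComp S H L C → (fun y => g * y) '' C = C := by
    intro g hg C hC
    obtain ⟨h, hker, rfl⟩ := Subgroup.mem_map.mp hg
    have h1 : φ h = 1 := hker
    have h3 : ((φ h) ⟨C, hC⟩ : {C : Set G // IsDeepComp S H L C}) = ⟨C, hC⟩ := by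
      rw [h1]; rfl
    have h4 := congrArg Subtype.val h3
    simpa [hφ, deepHom, deepEquiv] using h4
  -- a finite quotient and the constant M
  haveI hQfin : Finite (H ⧸ φ.ker) := by
    rw [Subgroup.index_eq_card] at hkerind
    exact (Nat.card_ne_zero.mp hkerind).2
  haveI := Fintype.ofFinite (H ⧸ φ.ker)
  set M : ℕ := Finset.univ.sup
    (fun q : H ⧸ φ.ker => (Cay S).dist (((q.out : H) : G))⁻¹ 1) with hM
  have hHM : ∀ g : G, g ∈ H → ∃ a ∈ (H₀ : Set G), (Cay S).dist g a ≤ M := by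
    intro g hg
    set hh : H := ⟨g, hg⟩ with hhh
    obtain ⟨k, hk⟩ := QuotientGroup.mk_out_eq_mul φ.ker hh⁻¹
    have hgeq : hh = (k : H) * ((QuotientGroup.mk hh⁻¹ : H ⧸ φ.ker).out)⁻¹ := by
      rw [hk]; group
    refine ⟨((k : H) : G), Subgroup.mem_map.mpr ⟨(k : H), k.2, rfl⟩, ?_⟩
    have h6 := congrArg (fun x : H => (x : G)) hgeq
    push_cast at h6
    have h7 : g = ((k : H) : G)
        * ((((QuotientGroup.mk hh⁻¹ : H ⧸ φ.ker).out : H) : G))⁻¹ := h6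
    have e1 := cay_dist_mul hc ((k : H) : G)
      ((((QuotientGroup.mk hh⁻¹ : H ⧸ φ.ker).out : H) : G))⁻¹ 1
    rw [mul_one] at e1
    rw [h7, e1, hM]
    exact Finset.le_sup
      (f := fun q : H ⧸ φ.ker => (Cay S).dist (((q.out : H) : G))⁻¹ 1)
      (Finset.mem_univ (QuotientGroup.mk hh⁻¹ : H ⧸ φ.ker))
  set ℓ := L + M with hℓ
  have hWsub : nbhd S (H : Set G) L ⊆ nbhd S (H₀ : Set G) ℓ := by
    rintro x ⟨a, ha, hd⟩
    obtain ⟨b, hb, hdb⟩ := hHM a ha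
    exact ⟨b, hb, le_trans (hc.dist_triangle (v := a)) (by omega)⟩
  have hmono : RestrictTo (Cay S) (nbhd S (H₀ : Set G) ℓ)ᶜ
      ≤ RestrictTo (Cay S) (nbhd S (H : Set G) L)ᶜ := by
    intro u v huv
    obtain ⟨h1, h2, h3⟩ := huv
    exact ⟨h1, fun m => h2 (hWsub m), fun m => h3 (hWsub m)⟩
  have h1W : (1 : G) ∈ nbhd S (H₀ : Set G) ℓ :=
    ⟨1, H₀.one_mem, by rw [SimpleGraph.dist_self]; exact Nat.zero_le _⟩
  -- each f i contains a deep component for H₀ at level ℓ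
  have hCex : ∀ i : Fin p, ∃ C : Set G, IsDeepComp S H₀ ℓ C ∧ C ⊆ f i := by
    intro i
    obtain ⟨⟨x₀, hx₀, hfi⟩, hdp⟩ := hdc i
    have hch : ∀ n : ℕ, ∃ c ∈ f i, ∀ h ∈ H, n + ℓ < (Cay S).dist c h := fun n => hdp (n + ℓ)
    choose c hcf hcd using hch
    have hcW : ∀ n, c n ∉ nbhd S (H₀ : Set G) ℓ := by
      intro n hn
      obtain ⟨a, ha, hd⟩ := hn
      have := hcd n a (hH₀le ha)
      omega
    have hbd : ∀ n : ℕ, ∃ z a : G,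
        (RestrictTo (Cay S) (nbhd S (H₀ : Set G) ℓ)ᶜ).Reachable (c n) z ∧
        a ∈ H₀ ∧ (Cay S).dist 1 (a⁻¹ * z) ≤ ℓ + 1 := by
      intro n
      obtain ⟨w⟩ := hc.preconnected (c n) 1
      obtain ⟨z, y, hr, hz, hy, hadj⟩ := exists_boundary _ w (hcW n) h1W
      obtain ⟨a, haH₀, hya⟩ := hy
      refine ⟨z, a, hr, haH₀, ?_⟩
      have h1 : (Cay S).dist z y ≤ 1 := by
        have h0 := SimpleGraph.dist_le hadj.toWalk
        simpa [SimpleGraph.Adj.toWalk] using h0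
      have h2 : (Cay S).dist z a ≤ ℓ + 1 :=
        le_trans (hc.dist_triangle (v := y)) (by omega)
      have h3 : (Cay S).dist 1 (a⁻¹ * z) = (Cay S).dist z a := by
        have h4 := cay_dist_mul hc a⁻¹ z a
        rw [inv_mul_cancel] at h4
        rw [← h4, SimpleGraph.dist_comm]
      omega
    choose z a hre haH₀ hball using hbd
    haveI : Finite {x : G // (Cay S).dist 1 x ≤ ℓ + 1} :=
      (ball_finite hsym hc (ℓ + 1)).to_subtype
    obtain ⟨b, hbinf⟩ := Finite.exists_infinite_fiber
      (fun n : ℕ => (⟨(a n)⁻¹ * z n, hball n⟩ : {x : G // (Cay S).dist 1 x ≤ ℓ + 1}))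
    have hNinf : {n : ℕ | (a n)⁻¹ * z n = (b : G)}.Infinite := by
      have hinf := Set.infinite_coe_iff.mp hbinf
      exact hinf.mono (fun n hn => by simpa [Subtype.ext_iff] using hn)
    obtain ⟨n₀, hn₀⟩ := hNinf.nonempty
    refine ⟨{y : G | (RestrictTo (Cay S) (nbhd S (H₀ : Set G) ℓ)ᶜ).Reachable (c n₀) y},
      ⟨⟨c n₀, hcW n₀, rfl⟩, ?_⟩, ?_⟩
    · intro R
      obtain ⟨m, hmN, hmR⟩ : ∃ m ∈ {n : ℕ | (a n)⁻¹ * z n = (b : G)}, R < m := by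
        by_contra hcon
        push_neg at hcon
        exact hNinf (Set.Finite.subset (Set.finite_Iic R) (fun m hm => hcon m hm))
      refine ⟨a n₀ * ((a m)⁻¹ * c m), ?_, ?_⟩
      · have t1 : (RestrictTo (Cay S) (nbhd S (H₀ : Set G) ℓ)ᶜ).Reachable
            ((a m)⁻¹ * c m) ((a m)⁻¹ * z m) :=
          restrict_reachable_mul hc (H₀.inv_mem (haH₀ m)) (hre m)
        have t2 : (RestrictTo (Cay S) (nbhd S (H₀ : Set G) ℓ)ᶜ).Reachable
            (a n₀ * ((a m)⁻¹ * z m)) (a n₀ * ((a m)⁻¹ * c m)) :=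
          restrict_reachable_mul hc (haH₀ n₀) t1.symm
        have t3 : a n₀ * ((a m)⁻¹ * z m) = z n₀ := by
          have hm' : (a m)⁻¹ * z m = (b : G) := hmN
          rw [hm', ← hn₀]
          simp
        rw [t3] at t2
        exact (hre n₀).trans t2
      · intro h hh
        have hgd : (Cay S).dist (a n₀ * ((a m)⁻¹ * c m)) h
            = (Cay S).dist (c m) (a m * ((a n₀)⁻¹ * h)) := by
          have h5 := cay_dist_mul hc (a m * (a n₀)⁻¹) (a n₀ * ((a m)⁻¹ * c m)) h
          rw [← h5]
          congr 1
          · group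
          · group
        rw [hgd]
        have hmem : a m * ((a n₀)⁻¹ * h) ∈ H :=
          hH₀le (H₀.mul_mem (haH₀ m) (H₀.mul_mem (H₀.inv_mem (haH₀ n₀)) hh))
        have := hcd m _ hmem
        omega
    · intro y hy
      have hy' : (RestrictTo (Cay S) (nbhd S (H : Set G) L)ᶜ).Reachable (c n₀) y :=
        SimpleGraph.Reachable.mono hmono hy
      have hcn₀ : (RestrictTo (Cay S) (nbhd S (H : Set G) L)ᶜ).Reachable x₀ (c n₀) := by
        have := hcf n₀
        rw [hfi] at this
        exact this
      rw [hfi]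
      exact hcn₀.trans hy'
  choose C hCdeep hCsub using hCex
  refine ⟨H₀, hH₀le, hrelne, ℓ, C, hCdeep, ?_⟩
  intro i j hij k hk heq
  obtain ⟨d, hd, -⟩ := (hCdeep i).2 0
  have h1 : k * d ∈ f i := by
    rw [← hfix k hk (f i) (hdc i)]
    exact Set.mem_image_of_mem _ (hCsub i hd)
  have h2 : k * d ∈ f j := by
    have h3 : k * d ∈ (fun x => k * x) '' C i := Set.mem_image_of_mem _ hd
    rw [heq] at h3
    exact hCsub j h3
  obtain ⟨⟨xi, hxi, hfieq⟩, -⟩ := hdc i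
  obtain ⟨⟨xj, hxj, hfjeq⟩, -⟩ := hdc j
  have ri : (RestrictTo (Cay S) (nbhd S (H : Set G) L)ᶜ).Reachable xi (k * d) := by
    rw [hfieq] at h1; exact h1
  have rj : (RestrictTo (Cay S) (nbhd S (H : Set G) L)ᶜ).Reachable xj (k * d) := by
    rw [hfjeq] at h2; exact h2
  have : f i = f j := by
    rw [hfieq, hfjeq, ← class_eq_of_mem ri, ← class_eq_of_mem rj]
  exact hij (hinj this)
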